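/- Let x_m > 0 and α > 0, and let f(x) = α · x_m^α / x^{α+1} for x ≥ x_m and f(x) = 0 otherwise, the density of the Pareto distribution with scale x_m and shape α. Then −∫_ℝ f(x) log₂(|x| · f(x)) dx = log₂(e/α). In particular this value does not depend on the scale parameter x_m. -/

import Mathlib

open Real MeasureTheory Set Filter

lemma aux_int_rpow_log {p c : ℝ} (hp : p < -1) (hc : 0 < c) :
    IntegrableOn (fun x : ℝ => x ^ p * Real.log x) (Set.Ioi c) := by
  set ε : ℝ := (-1 - p) / 2 with hε
  have hε0 : 0 < ε := by rw [hε]; linarith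
  set b : ℝ := p + ε with hb
  have hb1 : b < -1 := by rw [hb, hε]; linarith
  set L : ℝ := max 0 (Real.log c⁻¹) with hL
  have hL0 : 0 ≤ L := le_max_left _ _
  have hcε : 0 < c ^ ε := Real.rpow_pos_of_pos hc ε
  set M : ℝ := 1 / ε + L / c ^ ε with hM
  have hM0 : 0 ≤ M := by positivity
  have hbd : ∀ x ∈ Set.Ioi c, ‖x ^ p * Real.log x‖ ≤ ‖M * x ^ b‖ := by
    intro x hx
    have hx0 : 0 < x := hc.trans hx
    have hxε : 0 < x ^ ε := Real.rpow_pos_of_pos hx0 ε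
    have h1 : |Real.log x| ≤ M * x ^ ε := by
      have hcx : c ^ ε ≤ x ^ ε := Real.rpow_le_rpow hc.le (le_of_lt hx) hε0.le
      rcases le_or_gt 1 x with h | h
      · rw [abs_of_nonneg (Real.log_nonneg h)]
        calc Real.log x ≤ x ^ ε / ε := Real.log_le_rpow_div hx0.le hε0
          _ = (1 / ε) * x ^ ε := by ring
          _ ≤ M * x ^ ε := by
              apply mul_le_mul_of_nonneg_right _ hxε.le
              rw [hM]
              have := div_nonneg hL0 hcε.le
              linarith
      · rw [abs_of_nonpos (Real.log_nonpos hx0.le h.le), ← Real.log_inv]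
        have h2 : Real.log x⁻¹ ≤ Real.log c⁻¹ :=
          Real.log_le_log (by positivity) (by
            apply inv_anti₀ hc (le_of_lt hx))
        calc Real.log x⁻¹ ≤ L := le_trans h2 (le_max_right _ _)
          _ = (L / c ^ ε) * c ^ ε := by field_simp
          _ ≤ (L / c ^ ε) * x ^ ε := by
              apply mul_le_mul_of_nonneg_left hcx (by positivity)
          _ ≤ M * x ^ ε := by
              apply mul_le_mul_of_nonneg_right _ hxε.le
              rw [hM]
              have := one_div_pos.mpr hε0
              linarith
    have hxp : 0 ≤ x ^ p := (Real.rpow_pos_of_pos hx0 p).le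
    have : ‖x ^ p * Real.log x‖ = x ^ p * |Real.log x| := by
      rw [Real.norm_eq_abs, abs_mul, abs_of_nonneg hxp]
    rw [this, Real.norm_eq_abs, abs_of_nonneg (by positivity : 0 ≤ M * x ^ b)]
    calc x ^ p * |Real.log x| ≤ x ^ p * (M * x ^ ε) :=
          mul_le_mul_of_nonneg_left h1 hxp
      _ = M * x ^ b := by rw [hb, Real.rpow_add hx0]; ring
  have hmeas : AEStronglyMeasurable (fun x : ℝ => x ^ p * Real.log x)
      (volume.restrict (Set.Ioi c)) := by
    apply ContinuousOn.aestronglyMeasurable _ measurableSet_Ioi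
    intro x hx
    have hx0 : 0 < x := hc.trans hx
    exact ((Real.continuousAt_rpow_const x p (Or.inl hx0.ne')).mul
      (Real.continuousAt_log hx0.ne')).continuousWithinAt
  have hint : IntegrableOn (fun x : ℝ => M * x ^ b) (Set.Ioi c) :=
    (integrableOn_Ioi_rpow_of_lt hb1 hc).const_mul M
  refine MeasureTheory.Integrable.mono hint hmeas ?_
  rw [MeasureTheory.ae_restrict_iff' measurableSet_Ioi]
  exact Filter.Eventually.of_forall hbd

/-- Differential floating-point entropy of the Pareto
distribution. -/
theorem fp_entropy_pareto
    (xm α : ℝ) (hxm : 0 < xm) (hα : 0 < α)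
    (f : ℝ → ℝ)
    (hf : ∀ x, f x = if xm ≤ x then α * xm ^ α / x ^ (α + 1) else 0) :
    -∫ x, f x * Real.logb 2 (|x| * f x)
      = Real.logb 2 (Real.exp 1 / α) := by
  have h2 : (0 : ℝ) < Real.log 2 := Real.log_pos one_lt_two
  have hxmα : (0 : ℝ) < xm ^ α := Real.rpow_pos_of_pos hxm α
  set A : ℝ := α * xm ^ α with hA
  have hA0 : 0 < A := mul_pos hα hxmα
  set C : ℝ := Real.log A with hC
  set g : ℝ → ℝ := fun x => A / Real.log 2 * x ^ (-(α + 1)) * (C - α * Real.log x) with hg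
  set F : ℝ → ℝ := fun x => A / (α * Real.log 2) * (x ^ (-α) * (α * Real.log x + 1 - C))
    with hF
  -- reduce to integral over Ioi xm of g
  have hzero : ∀ x ∉ Set.Ici xm, f x * Real.logb 2 (|x| * f x) = 0 := by
    intro x hx
    rw [hf x, if_neg (by simpa using hx), zero_mul]
  have h1 : ∫ x, f x * Real.logb 2 (|x| * f x)
      = ∫ x in Set.Ioi xm, f x * Real.logb 2 (|x| * f x) := by
    rw [← MeasureTheory.setIntegral_eq_integral_of_forall_compl_eq_zero hzero,
      MeasureTheory.integral_Ici_eq_integral_Ioi]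
  have heq : Set.EqOn (fun x => f x * Real.logb 2 (|x| * f x)) g (Set.Ioi xm) := by
    intro x hx
    have hx0 : 0 < x := hxm.trans hx
    have hfx : f x = A * x ^ (-(α + 1)) := by
      rw [hf x, if_pos (le_of_lt hx), Real.rpow_neg hx0.le, div_eq_mul_inv, hA]
    have hxx : x * x ^ (-(α + 1)) = x ^ (-α) := by
      nth_rewrite 1 [← Real.rpow_one x]
      rw [← Real.rpow_add hx0]
      norm_num
    have habs : |x| * f x = A * x ^ (-α) := by
      rw [hfx, abs_of_pos hx0, ← mul_assoc, mul_comm x A, mul_assoc, hxx]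
    simp only
    rw [habs, hfx, Real.logb, Real.log_mul hA0.ne' (Real.rpow_pos_of_pos hx0 _).ne',
      Real.log_rpow hx0, hg, ← hC]
    field_simp
    ring
  -- integrability of g
  have hint : IntegrableOn g (Set.Ioi xm) := by
    have e1 : IntegrableOn (fun x : ℝ => x ^ (-(α + 1))) (Set.Ioi xm) :=
      integrableOn_Ioi_rpow_of_lt (by linarith) hxm
    have e2 : IntegrableOn (fun x : ℝ => x ^ (-(α + 1)) * Real.log x) (Set.Ioi xm) :=
      aux_int_rpow_log (by linarith) hxm
    have hgeq : g = fun x => (A / Real.log 2 * C) * x ^ (-(α + 1))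
        - (A / Real.log 2 * α) * (x ^ (-(α + 1)) * Real.log x) := by
      funext x; rw [hg]; ring
    rw [hgeq]
    exact (e1.const_mul _).sub (e2.const_mul _)
  -- antiderivative
  have hderiv : ∀ x ∈ Set.Ici xm, HasDerivAt F (g x) x := by
    intro x hx
    have hx0 : 0 < x := lt_of_lt_of_le hxm hx
    have d1 : HasDerivAt (fun y : ℝ => y ^ (-α)) (-α * x ^ (-α - 1)) x :=
      Real.hasDerivAt_rpow_const (Or.inl hx0.ne')
    have d3 : HasDerivAt (fun y : ℝ => α * Real.log y + 1 - C) (α * x⁻¹) x :=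
      (((Real.hasDerivAt_log hx0.ne').const_mul α).add_const 1).sub_const C
    have := (d1.mul d3).const_mul (A / (α * Real.log 2))
    convert this using 1
    · rfl
    · rfl
    · rfl
    have e3 : x ^ (-α) = x ^ (-α - 1) * x := by
      have h := Real.rpow_add hx0 (-α - 1) 1
      rw [Real.rpow_one, show (-α - 1 + 1 : ℝ) = -α by ring] at h
      exact h
    rw [hg]
    simp only
    rw [show (-(α + 1)) = -α - 1 by ring, e3]
    field_simp
    ring
  -- limit of F at infinity
  have htend : Filter.Tendsto F Filter.atTop (nhds 0) := by
    have t1 : Tendsto (fun x : ℝ => x ^ (-α)) atTop (nhds 0) := tendsto_rpow_neg_atTop hα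
    have t2 : Tendsto (fun x : ℝ => Real.log x * x ^ (-α)) atTop (nhds 0) := by
      have := (isLittleO_log_rpow_atTop hα).tendsto_div_nhds_zero
      refine this.congr' ?_
      filter_upwards [Filter.eventually_gt_atTop (0 : ℝ)] with x hx
      rw [Real.rpow_neg hx.le, div_eq_mul_inv]
    have t3 : Tendsto (fun x : ℝ => A / (α * Real.log 2) *
        (α * (Real.log x * x ^ (-α)) + (1 - C) * x ^ (-α))) atTop
        (nhds (A / (α * Real.log 2) * (α * 0 + (1 - C) * 0))) :=
      ((t2.const_mul α).add (t1.const_mul (1 - C))).const_mul _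
    have t4 : Tendsto F atTop (nhds (A / (α * Real.log 2) * (α * 0 + (1 - C) * 0))) :=
      t3.congr (fun x => by simp only [hF]; ring)
    simpa using t4
  rw [h1, MeasureTheory.setIntegral_congr_fun measurableSet_Ioi heq,
    integral_Ioi_of_hasDerivAt_of_tendsto' hderiv hint htend]
  -- final arithmetic
  have key : A * xm ^ (-α) = α := by
    rw [hA, Real.rpow_neg hxm.le, mul_assoc, mul_inv_cancel₀ hxmα.ne']
    ring
  have hCval : C = Real.log α + α * Real.log xm := by
    rw [hC, hA, Real.log_mul hα.ne' hxmα.ne', Real.log_rpow hxm]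
  rw [hF]
  simp only
  rw [Real.logb, Real.log_div (Real.exp_ne_zero 1) hα.ne', Real.log_exp, hCval]
  have hxmn : 0 < xm ^ (-α) := Real.rpow_pos_of_pos hxm _
  field_simp
  linear_combination (1 - Real.log α) * key
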